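/- Let l, m, n be non-negative integers and let μ, ν, λ be partitions with l(μ) ≤ m, l(ν) ≤ n, λ ⊂ ⟨l^{m+n}⟩ and μ ⋆_{m,n} ν = λ. Then μ ⊂ ⟨(n+l)^m⟩ and ν ⊂ ⟨(m+l)^n⟩, and, writing μ̃ for the (n+l, m)-complement of μ, ν̃ for the (m+l, n)-complement of ν and λ̃ for the (l, m+n)-complement of λ, one has λ̃ = μ̃ ⋆_{m,n} ν̃ and ε_{m,n}(μ̃, ν̃) = (−1)^{mn} · ε_{m,n}(μ, ν). -/

import Mathlib

open scoped Classical

/-- `f : ℕ → ℕ` represents a partition via its parts `f 1 ≥ f 2 ≥ ⋯`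
(indices start at `1`; we normalize the unused value at `0` by `f 0 = f 1`). -/
def IsPartition (f : ℕ → ℕ) : Prop :=
  f 0 = f 1 ∧ (∀ i j, i ≤ j → f j ≤ f i) ∧ ∃ N, ∀ i, N ≤ i → f i = 0

/-- the partition `f` has length (number of positive parts) at most `r`,
i.e. `l(f) ≤ r`. -/
def LenLE (f : ℕ → ℕ) (r : ℕ) : Prop := ∀ i, r < i → f i = 0

/-- two partitions have the same parts. -/
def EqParts (f g : ℕ → ℕ) : Prop := ∀ i, 1 ≤ i → f i = g i

/-- normalize the value at the (unused) index `0`. -/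
def pad (f : ℕ → ℕ) : ℕ → ℕ := fun i => if i = 0 then f 1 else f i

/-- the multiset `{f i + N - i : i = 1, …, N}`. -/
def hooks (N : ℕ) (f : ℕ → ℕ) : Multiset ℕ :=
  (Multiset.range N).map (fun i => f (i + 1) + N - (i + 1))

/-- `lam` is the `(m,n)`-overlap of `mu` and `nu`, i.e. `mu ⋆_{m,n} nu = lam`:
`lam` is a partition of length at most `m + n` such that the sequence
`(lam i + (m+n) - i)_{i=1..m+n}` is a rearrangement of the concatenation of
`(mu i + m - i)_{i=1..m}` and `(nu j + n - j)_{j=1..n}`. -/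
def IsOverlap (m n : ℕ) (mu nu lam : ℕ → ℕ) : Prop :=
  LenLE lam (m + n) ∧ hooks (m + n) lam = hooks m mu + hooks n nu

/-- `mu ⋆_{m,n} nu = ∞`: the two hook sequences share a common value. -/
def OverlapInfinite (m n : ℕ) (mu nu : ℕ → ℕ) : Prop :=
  ∃ a, a ∈ hooks m mu ∧ a ∈ hooks n nu

/-- the sign `ε_{m,n}(mu, nu)` of the permutation sorting the concatenation of
`(mu i + m - i)_{i=1..m}` and `(nu j + n - j)_{j=1..n}` into strictly decreasing
order, computed as `(-1)` to the number of inversions. -/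
def overlapSign (m n : ℕ) (mu nu : ℕ → ℕ) : ℤ :=
  (-1) ^ (((Finset.range m ×ˢ Finset.range n).filter (fun p =>
    mu (p.1 + 1) + m - (p.1 + 1) < nu (p.2 + 1) + n - (p.2 + 1))).card)

/-- the truncation `(f_1, …, f_r)` of a partition. -/
def truncateP (f : ℕ → ℕ) (r : ℕ) : ℕ → ℕ := pad fun i => if i ≤ r then f i else 0

/-- `μ + ⟨k^l⟩ = (μ_1 + k, …, μ_l + k)`. -/
def addRect (mu : ℕ → ℕ) (k l : ℕ) : ℕ → ℕ := pad fun i => if i ≤ l then mu i + k else 0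

/-- `μ − ⟨k^l⟩ = (μ_1 − k, …, μ_l − k)`. -/
def subRect (mu : ℕ → ℕ) (k l : ℕ) : ℕ → ℕ := pad fun i => if i ≤ l then mu i - k else 0

/-- `ν ∪ a`: `ν` regarded as a sequence of length `r`, with the sequence `a`
appended after position `r`. -/
def concatSeq (nu : ℕ → ℕ) (r : ℕ) (tail : ℕ → ℕ) : ℕ → ℕ :=
  pad fun i => if i ≤ r then nu i else tail (i - r)

/-- the rectangular partition `⟨a^b⟩` (with `b` parts equal to `a`). -/
def rectP (a b : ℕ) : ℕ → ℕ := pad fun i => if i ≤ b then a else 0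

/-- the `(m,n)`-complement `λ̃ = (m − λ_n, …, m − λ_1)` of a partition `λ ⊂ ⟨m^n⟩`. -/
def complSeq (m n : ℕ) (lam : ℕ → ℕ) : ℕ → ℕ :=
  pad fun i => if i ≤ n then m - lam (n + 1 - i) else 0

noncomputable section

/-- the `i`-th part `λ'_i = #{j ≥ 1 : λ_j ≥ i}` of the conjugate partition. -/
def conjPart (f : ℕ → ℕ) (i : ℕ) : ℕ := {j : ℕ | 1 ≤ j ∧ i ≤ f j}.ncard

/-- the conjugate partition `λ'`. -/
def conjP (f : ℕ → ℕ) : ℕ → ℕ := pad fun i => conjPart f i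

/-- the set of integers `k ≤ min{m,n}` with `λ_{n+1−k} ≤ m − k`. -/
def indexSet (m n : ℕ) (lam : ℕ → ℕ) : Set ℤ :=
  {k : ℤ | k ≤ min (m : ℤ) (n : ℤ) ∧ (lam ((n : ℤ) + 1 - k).toNat : ℤ) ≤ (m : ℤ) - k}

/-- `k` is the `(m,n)`-index of `lam`: the largest integer `k ≤ min{m,n}`
with `λ_{n+1−k} ≤ m − k`. -/
def IsIndex (m n : ℕ) (lam : ℕ → ℕ) (k : ℤ) : Prop := IsGreatest (indexSet m n lam) k

/-- the `(m,n)`-index of `lam`. -/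
def indexOf (m n : ℕ) (lam : ℕ → ℕ) : ℤ := sSup (indexSet m n lam)

variable {F : Type*} [Field F]

/-- `Δ(X) = ∏_{i<j} (X_i − X_j)`. -/
def vanDet {n : ℕ} (X : Fin n → F) : F :=
  ∏ i : Fin n, ∏ j : Fin n, if i < j then X i - X j else 1

/-- `Δ(X; Y) = ∏_{x ∈ X, y ∈ Y} (x − y)`. -/
def vanPair {n m : ℕ} (X : Fin n → F) (Y : Fin m → F) : F :=
  ∏ i, ∏ j, (X i - Y j)

/-- the Schur function `s_λ(X)`. -/
def schur {n : ℕ} (lam : ℕ → ℕ) (X : Fin n → F) : F :=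
  if LenLE lam n then
    (Matrix.of fun i j : Fin n =>
      X i ^ (lam ((j : ℕ) + 1) + n - ((j : ℕ) + 1))).det / vanDet X
  else 0

/-- the subsequence of `X` indexed by `I` (in increasing order of indices). -/
def subSeq {n : ℕ} (X : Fin n → F) (I : Finset (Fin n)) : Fin I.card → F :=
  fun j => X (I.orderIsoOfFin rfl j).1

/-- the sign `ε(λ) = (−1)^{λ_1+⋯+λ_{n−k}} (−1)^{mk} (−1)^{k(k−1)/2}` from the
determinantal formula. -/
def LSsign (m n k : ℕ) (lam : ℕ → ℕ) : ℤ :=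
  (-1) ^ (∑ i ∈ Finset.range (n - k), lam (i + 1)) * (-1) ^ (m * k) *
    (-1) ^ (k * (k - 1) / 2)

/-- the Moens–Van der Jeugt block matrix. -/
def LSmat (k : ℕ) {n m : ℕ} (lam : ℕ → ℕ) (X : Fin n → F) (Y : Fin m → F) :
    Matrix (Fin (n + (m - k))) (Fin (n + (m - k))) F :=
  Matrix.of fun r c =>
    if hr : (r : ℕ) < n then
      if hc : (c : ℕ) < m then (X ⟨(r : ℕ), hr⟩ - Y ⟨(c : ℕ), hc⟩)⁻¹
      else X ⟨(r : ℕ), hr⟩ ^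
        ((lam ((c : ℕ) - m + 1) : ℤ) + (n : ℤ) - (m : ℤ) - (((c : ℕ) - m + 1 : ℕ) : ℤ))
    else
      if hc : (c : ℕ) < m then
        Y ⟨(c : ℕ), hc⟩ ^
          ((conjPart lam ((r : ℕ) - n + 1) : ℤ) + (m : ℤ) - (n : ℤ) - (((r : ℕ) - n + 1 : ℕ) : ℤ))
      else 0

/-- the Littlewood–Schur function `LS_λ(−X; Y)`, defined by the determinantal
formula of Moens and Van der Jeugt: it is `0` if the `(m,n)`-index `k` of `λ` is
negative, and otherwise equals `ε(λ) · Δ(Y;X)/(Δ(X)Δ(Y)) · det M`. -/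
def LS {n m : ℕ} (lam : ℕ → ℕ) (X : Fin n → F) (Y : Fin m → F) : F :=
  if indexOf m n lam < 0 then 0
  else (LSsign m n (indexOf m n lam).toNat lam : F) * vanPair Y X /
    (vanDet X * vanDet Y) * (LSmat (indexOf m n lam).toNat lam X Y).det

/-- `walkMu lam n I` is the partition with `i`-th part `λ_{V_i} + n + i − V_i`,
where `V_1 < ⋯ < V_card(I)` is the increasing (1-based) enumeration of `I`. -/
def walkMu (lam : ℕ → ℕ) (n : ℕ) {N : ℕ} (I : Finset (Fin N)) : ℕ → ℕ :=
  pad fun i =>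
    if h : 1 ≤ i ∧ i ≤ I.card then
      lam (((I.orderIsoOfFin rfl ⟨i - 1, by omega⟩).1 : ℕ) + 1) +
        (n + i - (((I.orderIsoOfFin rfl ⟨i - 1, by omega⟩).1 : ℕ) + 1))
    else 0

/-- `C_N(K)`: the set `{N − j + 1 : j ∈ {1,…,N} ∖ K}`. -/
def Cfin (N : ℕ) (K : Finset ℕ) : Finset ℕ :=
  (Finset.Icc 1 N \ K).image (fun j => N + 1 - j)

/-- the subpartition `sub_N(λ, s)`: its `j`-th part is
`λ_{s_j} + (N − s_j) − (r − j)`, where `s_1 < ⋯ < s_r` are the elements of `s`. -/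
def subPartF (N : ℕ) (lam : ℕ → ℕ) (s : Finset ℕ) : ℕ → ℕ :=
  pad fun j =>
    if h : 1 ≤ j ∧ j ≤ s.card then
      lam ((s.orderIsoOfFin rfl ⟨j - 1, by omega⟩).1) +
        (N - (s.orderIsoOfFin rfl ⟨j - 1, by omega⟩).1) - (s.card - j)
    else 0

end

/-- `α` is a quasi-partition associated to the subset with membership
predicate `inV` (the complement being taken inside `{1, …, m+n}`). -/
def IsQuasiPartition (m n : ℕ) (inV : ℕ → Prop) (α : ℕ → ℤ) : Prop :=
  0 ≤ α (m + n) ∧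
  (∀ i, 1 < i → i < m + n → ¬(α (i - 1) < α i ∧ α i < α (i + 1))) ∧
  (∀ i, 1 ≤ i → i < m + n → ((inV i ↔ inV (i + 1)) → α (i + 1) ≤ α i)) ∧
  (∀ i, 1 ≤ i → i < m + n → (¬(inV i ↔ inV (i + 1)) → α (i + 1) ≤ α i + 1))

/-- the integer sequence `α_1, …, α_N` is a partition: non-increasing and
non-negative. -/
def IsPartitionSeqZ (N : ℕ) (α : ℕ → ℤ) : Prop :=
  (∀ i j, 1 ≤ i → i ≤ j → j ≤ N → α j ≤ α i) ∧ ∀ i, 1 ≤ i → i ≤ N → 0 ≤ α i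


lemma oc_range_rev (m : ℕ) :
    (Multiset.range m).map (fun i => m - 1 - i) = Multiset.range m := by
  have hinj : Set.InjOn (fun i => m - 1 - i) (Finset.range m) := by
    intro a ha b hb hab
    simp only [Finset.coe_range, Set.mem_Iio] at ha hb
    simp only at hab
    omega
  have himg : Finset.image (fun i => m - 1 - i) (Finset.range m) = Finset.range m := by
    ext j
    simp only [Finset.mem_image, Finset.mem_range]
    constructor
    · rintro ⟨i, hi, rfl⟩; omega
    · intro hj; exact ⟨m - 1 - j, by omega, by omega⟩
  have h := Finset.image_val_of_injOn hinj
  rw [himg] at h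
  rw [Finset.range_val] at h
  exact h.symm

lemma oc_map_rev {α : Type*} (m : ℕ) (f g : ℕ → α)
    (h : ∀ i, i < m → f i = g (m - 1 - i)) :
    (Multiset.range m).map f = (Multiset.range m).map g := by
  conv_rhs => rw [← oc_range_rev m, Multiset.map_map]
  apply Multiset.map_congr rfl
  intro i hi
  rw [Multiset.mem_range] at hi
  exact h i hi

lemma oc_compl_hook (A N c : ℕ) (f : ℕ → ℕ) (hc : A + N = c + 1)
    (hb : ∀ i, 1 ≤ i → f i ≤ A) (i : ℕ) (hi : i < N) :
    complSeq A N f (i + 1) + N - (i + 1)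
      = c - (f (N - 1 - i + 1) + N - (N - 1 - i + 1)) := by
  have h1 : N - 1 - i + 1 = N - i := by omega
  rw [h1]
  have hf := hb (N - i) (by omega)
  simp only [complSeq, pad]
  rw [if_neg (Nat.succ_ne_zero i), if_pos (by omega : i + 1 ≤ N)]
  have h2 : N + 1 - (i + 1) = N - i := by omega
  rw [h2]
  omega

lemma oc_hooks_compl (A N c : ℕ) (f : ℕ → ℕ) (hc : A + N = c + 1)
    (hb : ∀ i, 1 ≤ i → f i ≤ A) :
    hooks N (complSeq A N f) = (hooks N f).map (fun x => c - x) := by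
  unfold hooks
  rw [Multiset.map_map]
  apply oc_map_rev
  intro i hi
  exact oc_compl_hook A N c f hc hb i hi

lemma oc_hooks_nodup (N : ℕ) (f : ℕ → ℕ) (hf : ∀ i j, i ≤ j → f j ≤ f i) :
    (hooks N f).Nodup := by
  apply Multiset.Nodup.map_on _ (Multiset.nodup_range N)
  intro i hi j hj hij
  rw [Multiset.mem_range] at hi hj
  by_contra hne
  rcases Nat.lt_or_ge i j with h | h
  · have := hf (i + 1) (j + 1) (by omega); omega
  · have hji : j < i := by omega
    have := hf (j + 1) (i + 1) (by omega); omega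

/-- **Overlap and complementation** (Lemma 4.10): if `μ ⋆_{m,n} ν = λ` with
`λ ⊂ ⟨l^{m+n}⟩`, then `μ ⊂ ⟨(n+l)^m⟩`, `ν ⊂ ⟨(m+l)^n⟩`,
`λ̃ = μ̃ ⋆_{m,n} ν̃` and `ε_{m,n}(μ̃, ν̃) = (−1)^{mn} ε_{m,n}(μ, ν)`. -/
theorem overlap_complement
    {l m n : ℕ} (mu nu lam : ℕ → ℕ)
    (hmu : IsPartition mu) (hnu : IsPartition nu) (hlam : IsPartition lam)
    (hmul : LenLE mu m) (hnul : LenLE nu n)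
    (hlaml : LenLE lam (m + n)) (hlam1 : lam 1 ≤ l)
    (hov : IsOverlap m n mu nu lam) :
    mu 1 ≤ n + l ∧ nu 1 ≤ m + l ∧
    IsOverlap m n (complSeq (n + l) m mu) (complSeq (m + l) n nu)
      (complSeq l (m + n) lam) ∧
    overlapSign m n (complSeq (n + l) m mu) (complSeq (m + l) n nu) =
      (-1) ^ (m * n) * overlapSign m n mu nu := by
  obtain ⟨hlen, heq⟩ := hov
  by_cases h0 : l + m + n = 0
  · have hm : m = 0 := by omega
    have hn : n = 0 := by omega
    subst hm; subst hn
    refine ⟨by have := hmul 1 (by omega); omega, by have := hnul 1 (by omega); omega,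
      ⟨?_, ?_⟩, ?_⟩
    · intro i hi
      simp only [complSeq, pad]
      rw [if_neg (by omega : ¬ i = 0), if_neg (by omega : ¬ i ≤ 0 + 0)]
    · simp [hooks]
    · simp [overlapSign]
  · have hlamle : ∀ i, 1 ≤ i → lam i ≤ l := fun i hi => le_trans (hlam.2.1 1 i hi) hlam1
    have hmu1 : mu 1 ≤ n + l := by
      rcases Nat.eq_zero_or_pos m with hm | hm
      · have := hmul 1 (by omega); omega
      · have hmem : mu (0 + 1) + m - (0 + 1) ∈ hooks (m + n) lam := by
          rw [heq]
          refine Multiset.mem_add.2 (Or.inl ?_)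
          unfold hooks
          exact Multiset.mem_map.2 ⟨0, Multiset.mem_range.2 hm, rfl⟩
        unfold hooks at hmem
        obtain ⟨j, hj, hje⟩ := Multiset.mem_map.1 hmem
        rw [Multiset.mem_range] at hj
        norm_num at hje
        have := hlamle (j + 1) (by omega)
        omega
    have hnu1 : nu 1 ≤ m + l := by
      rcases Nat.eq_zero_or_pos n with hn | hn
      · have := hnul 1 (by omega); omega
      · have hmem : nu (0 + 1) + n - (0 + 1) ∈ hooks (m + n) lam := by
          rw [heq]
          refine Multiset.mem_add.2 (Or.inr ?_)
          unfold hooks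
          exact Multiset.mem_map.2 ⟨0, Multiset.mem_range.2 hn, rfl⟩
        unfold hooks at hmem
        obtain ⟨j, hj, hje⟩ := Multiset.mem_map.1 hmem
        rw [Multiset.mem_range] at hj
        norm_num at hje
        have := hlamle (j + 1) (by omega)
        omega
    have hmuB : ∀ i, 1 ≤ i → mu i ≤ n + l := fun i hi => le_trans (hmu.2.1 1 i hi) hmu1
    have hnuB : ∀ i, 1 ≤ i → nu i ≤ m + l := fun i hi => le_trans (hnu.2.1 1 i hi) hnu1
    have hcl := oc_hooks_compl l (m + n) (l + m + n - 1) lam (by omega) hlamle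
    have hcm := oc_hooks_compl (n + l) m (l + m + n - 1) mu (by omega) hmuB
    have hcn := oc_hooks_compl (m + l) n (l + m + n - 1) nu (by omega) hnuB
    have hdist : ∀ p : ℕ × ℕ, p.1 < m → p.2 < n →
        mu (p.1 + 1) + m - (p.1 + 1) ≠ nu (p.2 + 1) + n - (p.2 + 1) := by
      intro p hi hj he
      have hnd : (hooks (m + n) lam).Nodup := oc_hooks_nodup _ _ hlam.2.1
      rw [heq, Multiset.nodup_iff_count_le_one] at hnd
      have h1 : mu (p.1 + 1) + m - (p.1 + 1) ∈ hooks m mu := by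
        unfold hooks; exact Multiset.mem_map.2 ⟨p.1, Multiset.mem_range.2 hi, rfl⟩
      have h2 : mu (p.1 + 1) + m - (p.1 + 1) ∈ hooks n nu := by
        rw [he]; unfold hooks
        exact Multiset.mem_map.2 ⟨p.2, Multiset.mem_range.2 hj, rfl⟩
      have hcount := hnd (mu (p.1 + 1) + m - (p.1 + 1))
      rw [Multiset.count_add] at hcount
      have c1 := Multiset.count_pos.2 h1
      have c2 := Multiset.count_pos.2 h2
      omega
    refine ⟨hmu1, hnu1, ⟨?_, ?_⟩, ?_⟩
    · intro i hi
      simp only [complSeq, pad]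
      rw [if_neg (by omega : ¬ i = 0), if_neg (by omega : ¬ i ≤ m + n)]
    · rw [hcl, hcm, hcn, heq, Multiset.map_add]
    · have key : ((Finset.range m ×ˢ Finset.range n).filter (fun p =>
            complSeq (n + l) m mu (p.1 + 1) + m - (p.1 + 1) <
              complSeq (m + l) n nu (p.2 + 1) + n - (p.2 + 1))).card
          = ((Finset.range m ×ˢ Finset.range n).filter (fun p =>
            nu (p.2 + 1) + n - (p.2 + 1) < mu (p.1 + 1) + m - (p.1 + 1))).card := by
        apply Finset.card_nbij' (fun p => (m - 1 - p.1, n - 1 - p.2))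
          (fun p => (m - 1 - p.1, n - 1 - p.2))
        · intro p hp; obtain ⟨i, j⟩ := p
          simp only [Finset.mem_coe, Finset.mem_filter, Finset.mem_product, Finset.mem_range] at hp ⊢
          obtain ⟨⟨hi, hj⟩, hcond⟩ := hp
          refine ⟨⟨by omega, by omega⟩, ?_⟩
          rw [oc_compl_hook (n + l) m (l + m + n - 1) mu (by omega) hmuB i hi,
              oc_compl_hook (m + l) n (l + m + n - 1) nu (by omega) hnuB j hj] at hcond
          have b1 := hmuB (m - 1 - i + 1) (by omega)
          have b2 := hnuB (n - 1 - j + 1) (by omega)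
          omega
        · intro p hp; obtain ⟨i, j⟩ := p
          simp only [Finset.mem_coe, Finset.mem_filter, Finset.mem_product, Finset.mem_range] at hp ⊢
          obtain ⟨⟨hi, hj⟩, hcond⟩ := hp
          refine ⟨⟨by omega, by omega⟩, ?_⟩
          rw [oc_compl_hook (n + l) m (l + m + n - 1) mu (by omega) hmuB (m - 1 - i) (by omega),
              oc_compl_hook (m + l) n (l + m + n - 1) nu (by omega) hnuB (n - 1 - j) (by omega)]
          rw [show m - 1 - (m - 1 - i) = i by omega, show n - 1 - (n - 1 - j) = j by omega]
          have b1 := hmuB (i + 1) (by omega)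
          have b2 := hnuB (j + 1) (by omega)
          omega
        · intro p hp; obtain ⟨i, j⟩ := p
          simp only [Finset.mem_coe, Finset.mem_filter, Finset.mem_product, Finset.mem_range] at hp
          simp only [Prod.mk.injEq]
          exact ⟨by omega, by omega⟩
        · intro p hp; obtain ⟨i, j⟩ := p
          simp only [Finset.mem_coe, Finset.mem_filter, Finset.mem_product, Finset.mem_range] at hp
          simp only [Prod.mk.injEq]
          exact ⟨by omega, by omega⟩
      have hfe : (Finset.range m ×ˢ Finset.range n).filter (fun p =>
            ¬(mu (p.1 + 1) + m - (p.1 + 1) < nu (p.2 + 1) + n - (p.2 + 1)))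
          = (Finset.range m ×ˢ Finset.range n).filter (fun p =>
            nu (p.2 + 1) + n - (p.2 + 1) < mu (p.1 + 1) + m - (p.1 + 1)) := by
        apply Finset.filter_congr
        intro p hp
        simp only [Finset.mem_product, Finset.mem_range] at hp
        have := hdist p hp.1 hp.2
        omega
      have tri := Finset.card_filter_add_card_filter_not
        (s := Finset.range m ×ˢ Finset.range n)
        (p := fun p => mu (p.1 + 1) + m - (p.1 + 1) < nu (p.2 + 1) + n - (p.2 + 1))
      rw [hfe, Finset.card_product, Finset.card_range, Finset.card_range] at tri
      simp only [overlapSign]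
      rw [key]
      set e := ((Finset.range m ×ˢ Finset.range n).filter (fun p =>
        mu (p.1 + 1) + m - (p.1 + 1) < nu (p.2 + 1) + n - (p.2 + 1))).card with he
      set e' := ((Finset.range m ×ˢ Finset.range n).filter (fun p =>
        nu (p.2 + 1) + n - (p.2 + 1) < mu (p.1 + 1) + m - (p.1 + 1))).card with he'
      have hsq : ((-1 : ℤ)) ^ e * (-1) ^ e = 1 := by
        rw [← pow_add, ← two_mul, pow_mul]; norm_num
      calc ((-1 : ℤ)) ^ e' = ((-1) ^ e * (-1) ^ e) * (-1) ^ e' := by rw [hsq, one_mul]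
        _ = (-1) ^ (e + e') * (-1) ^ e := by ring
        _ = (-1) ^ (m * n) * (-1) ^ e := by rw [tri]
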